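/- arXiv:2502.18078 — 3 statements merged into one kernel-verified Lean document; each statement's English description precedes it below -/
import Mathlib

section
/- Let Π : ℝ^m → Mat_{d×d}(ℝ) be differentiable at x with Π(y)² = Π(y) for all y near x, set R := 2Π − I and ω_Π(v) := Π(x)·DΠ − DΠ·Π(x) (DΠ the directional derivative of Π at x in direction v). Then R is parallel for the connection d + ω_Π: for every v ∈ ℝ^m, DR + ω_Π(v)·R(x) − R(x)·ω_Π(v) = 0, where DR is the directional derivative of R at x in direction v. -/
attribute [local instance] Matrix.normedAddCommGroup Matrix.normedSpace

/-- Matrix multiplication as a continuous bilinear map (finite dimensions). -/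
noncomputable def matMulCLM (d : ℕ) :
    Matrix (Fin d) (Fin d) ℝ →L[ℝ] Matrix (Fin d) (Fin d) ℝ →L[ℝ] Matrix (Fin d) (Fin d) ℝ :=
  LinearMap.toContinuousLinearMap
    { toFun := fun A => LinearMap.toContinuousLinearMap (LinearMap.mul ℝ _ A)
      map_add' := by intro A B; ext C; simp [add_mul]
      map_smul' := by intro c A; ext C; simp [smul_mul_assoc] }

@[simp] lemma matMulCLM_apply (d : ℕ) (A B : Matrix (Fin d) (Fin d) ℝ) :
    matMulCLM d A B = A * B := by
  simp [matMulCLM]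

/-- For a projection-valued map `Proj` differentiable at `x`,
with `R := 2Π − I` and connection form `ω_Π(v) = Π(x)·DΠ − DΠ·Π(x)`, the map
`R` is parallel for the connection `d + ω_Π`: for every `v`,
`DR + ω_Π(v)·R(x) − R(x)·ω_Π(v) = 0`. -/
theorem involution_parallel_for_connection {m d : ℕ}
    (Proj : EuclideanSpace ℝ (Fin m) → Matrix (Fin d) (Fin d) ℝ)
    (x : EuclideanSpace ℝ (Fin m))
    (hdiff : DifferentiableAt ℝ Proj x)
    (hidem : ∀ᶠ y in nhds x, Proj y * Proj y = Proj y)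
    (R : EuclideanSpace ℝ (Fin m) → Matrix (Fin d) (Fin d) ℝ)
    (hR : ∀ y, R y = (2 : ℝ) • Proj y - 1)
    (ω : EuclideanSpace ℝ (Fin m) → Matrix (Fin d) (Fin d) ℝ)
    (hω : ∀ v, ω v = Proj x * fderiv ℝ Proj x v - fderiv ℝ Proj x v * Proj x) :
    ∀ v : EuclideanSpace ℝ (Fin m),
      fderiv ℝ R x v + ω v * R x - R x * ω v = 0 := by
  intro v
  have hPi : Proj x * Proj x = Proj x := hidem.self_of_nhds
  -- derivative of the square map
  have hsq : HasFDerivAt (fun y => Proj y * Proj y)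
      (((matMulCLM d).isBoundedBilinearMap.deriv (Proj x, Proj x)).comp
        ((fderiv ℝ Proj x).prod (fderiv ℝ Proj x))) x := by
    have h1 : HasFDerivAt (fun y => (Proj y, Proj y))
        ((fderiv ℝ Proj x).prod (fderiv ℝ Proj x)) x :=
      (hdiff.hasFDerivAt).prodMk (hdiff.hasFDerivAt)
    have h2 := ((matMulCLM d).isBoundedBilinearMap.hasFDerivAt (Proj x, Proj x)).comp x h1
    exact h2.congr_of_eventuallyEq (Filter.Eventually.of_forall fun y => (matMulCLM_apply d (Proj y) (Proj y)).symm)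
  have hfeq : fderiv ℝ (fun y => Proj y * Proj y) x = fderiv ℝ Proj x :=
    Filter.EventuallyEq.fderiv_eq hidem
  set P : Matrix (Fin d) (Fin d) ℝ := fderiv ℝ Proj x v with hP
  have h1 : P = Proj x * P + P * Proj x := by
    rw [hP]
    have := congrArg (fun L => L v) (hfeq ▸ hsq.fderiv)
    exact this.trans (IsBoundedBilinearMap.deriv_apply _ _ _)
  -- ΠPΠ = 0
  have h2 : Proj x * P * Proj x = 0 := by
    have h := congrArg (fun A => Proj x * A) h1
    simp only [mul_add, ← mul_assoc, hPi] at h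
    have h' : Proj x * P + Proj x * P * Proj x = Proj x * P + 0 := by
      rw [add_zero]; exact h.symm
    exact add_left_cancel h'
  -- derivative of R
  have hRd : HasFDerivAt R ((2 : ℝ) • fderiv ℝ Proj x) x := by
    have : HasFDerivAt (fun y => (2 : ℝ) • Proj y - 1)
        ((2 : ℝ) • fderiv ℝ Proj x) x :=
      ((hdiff.hasFDerivAt).const_smul (2 : ℝ)).sub_const 1
    exact this.congr_of_eventuallyEq (Filter.Eventually.of_forall fun y => (hR y))
  have hRv : fderiv ℝ R x v = (2 : ℝ) • P := by
    rw [hRd.fderiv]; rfl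
  rw [hRv, hω, hR]
  set Q := Proj x with hQ
  have e1 : (Q * P - P * Q) * ((2 : ℝ) • Q - 1) - ((2 : ℝ) • Q - 1) * (Q * P - P * Q)
      = (Q * P * Q + Q * P * Q + Q * P * Q + Q * P * Q)
        - (P * (Q * Q) + P * (Q * Q)) - (Q * (Q * P) + Q * (Q * P)) := by
    rw [two_smul]
    noncomm_ring
  have e2 : Q * (Q * P) = Q * P := by rw [← mul_assoc, hPi]
  rw [← hP]
  rw [add_sub_assoc, e1, h2, hPi, e2, two_smul]
  have hfin : P + P = P * Q + P * Q + (Q * P + Q * P) := by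
    conv_lhs => rw [h1]
    abel
  rw [hfin]
  abel
end

section
/- Let R : U → Mat_{d×d}(ℝ) be twice continuously differentiable on an open set U ⊆ ℝ^m with R(y)·R(y) = I for all y ∈ U. For 1 ≤ i ≤ m define A_i(y) := R(y)·∂_i R(y). Then the connection d + A is flat: for all 1 ≤ i, j ≤ m and all y ∈ U, ∂_i A_j(y) − ∂_j A_i(y) + A_i(y)·A_j(y) − A_j(y)·A_i(y) = 0. In particular, for an idempotent-valued C² map Π and R = 2Π − I, the connection d + 2ω_Π with ω_Π := Π dΠ − dΠ Π is flat. -/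
attribute [local instance] Matrix.normedAddCommGroup Matrix.normedSpace

/-- The curvature `∂_i A_j − ∂_j A_i + [A_i, A_j]` at `y` of a matrix-valued
connection 1-form `A = (A_1, …, A_m)` on `ℝ^m`; a connection `d + A` is flat
when this vanishes identically. -/
noncomputable def connectionCurvature {m d : ℕ}
    (A : Fin m → EuclideanSpace ℝ (Fin m) → Matrix (Fin d) (Fin d) ℝ)
    (i j : Fin m) (y : EuclideanSpace ℝ (Fin m)) : Matrix (Fin d) (Fin d) ℝ :=
  fderiv ℝ (A j) y (EuclideanSpace.single i 1)
    - fderiv ℝ (A i) y (EuclideanSpace.single j 1)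
    + (A i y * A j y - A j y * A i y)

section Aux

variable {m d : ℕ}

local notation "𝕄" => Matrix (Fin d) (Fin d) ℝ
local notation "𝔼" => EuclideanSpace ℝ (Fin m)

noncomputable instance instNACGclmMat : NormedAddCommGroup (𝔼 →L[ℝ] 𝕄) :=
  ContinuousLinearMap.toNormedAddCommGroup

noncomputable instance instNSclmMat : NormedSpace ℝ (𝔼 →L[ℝ] 𝕄) :=
  ContinuousLinearMap.toNormedSpace

/-- Matrix multiplication as a continuous bilinear map. -/
noncomputable def mulCLM (d : ℕ) :
    Matrix (Fin d) (Fin d) ℝ →L[ℝ] Matrix (Fin d) (Fin d) ℝ →L[ℝ] Matrix (Fin d) (Fin d) ℝ :=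
  LinearMap.toContinuousLinearMap <|
    (LinearMap.toContinuousLinearMap :
        (Matrix (Fin d) (Fin d) ℝ →ₗ[ℝ] Matrix (Fin d) (Fin d) ℝ) ≃ₗ[ℝ] _).toLinearMap
      ∘ₗ LinearMap.mul ℝ (Matrix (Fin d) (Fin d) ℝ)

@[simp] lemma mulCLM_apply (A B : 𝕄) : mulCLM d A B = A * B := rfl

lemma hasFDerivAt_matmul {f g : 𝔼 → 𝕄} {f' g' : 𝔼 →L[ℝ] 𝕄} {x : 𝔼}
    (hf : HasFDerivAt f f' x) (hg : HasFDerivAt g g' x) :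
    HasFDerivAt (fun z => f z * g z)
      ((mulCLM d).precompR 𝔼 (f x) g' + (mulCLM d).precompL 𝔼 f' (g x)) x :=
  (mulCLM d).hasFDerivAt_of_bilinear hf hg

lemma fderiv_matmul {f g : 𝔼 → 𝕄} {x : 𝔼}
    (hf : DifferentiableAt ℝ f x) (hg : DifferentiableAt ℝ g x) (v : 𝔼) :
    fderiv ℝ (fun z => f z * g z) x v
      = f x * fderiv ℝ g x v + fderiv ℝ f x v * g x := by
  erw [(hasFDerivAt_matmul hf.hasFDerivAt hg.hasFDerivAt).fderiv]
  simp [ContinuousLinearMap.precompR, ContinuousLinearMap.precompL]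
  rfl

/-- First part: flatness of `d + R dR` for an involution-valued `R`. -/
lemma flat_aux (U : Set 𝔼) (hU : IsOpen U) (R : 𝔼 → 𝕄)
    (hR : ContDiffOn ℝ 2 R U) (hinv : ∀ y ∈ U, R y * R y = 1) :
    ∀ i j : Fin m, ∀ y ∈ U,
      connectionCurvature
        (fun i z => R z * fderiv ℝ R z (EuclideanSpace.single i 1)) i j y = 0 := by
  intro i j y hy
  have hRd : ∀ z ∈ U, DifferentiableAt ℝ R z := fun z hz =>
    (hR.contDiffAt (hU.mem_nhds hz)).differentiableAt (by norm_num)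
  have hR1 : ContDiffOn ℝ 1 (fderiv ℝ R) U := hR.fderiv_of_isOpen hU (by norm_num)
  have hR'd : ∀ z ∈ U, DifferentiableAt ℝ (fderiv ℝ R) z := fun z hz =>
    (hR1.contDiffAt (hU.mem_nhds hz)).differentiableAt one_ne_zero
  -- derivative of the constraint R·R = 1 : anticommutation
  have hanti : ∀ v, fderiv ℝ R y v * R y = -(R y * fderiv ℝ R y v) := by
    intro v
    have h1 : (fun w => R w * R w) =ᶠ[nhds y] fun _ => (1 : 𝕄) :=
      Filter.eventuallyEq_of_mem (hU.mem_nhds hy) fun w hw => hinv w hw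
    have h2 : fderiv ℝ (fun w => R w * R w) y = 0 := by
      rw [h1.fderiv_eq]; exact fderiv_const_apply 1
    have h3 := fderiv_matmul (hRd y hy) (hRd y hy) v
    rw [h2] at h3
    have h4 : R y * fderiv ℝ R y v + fderiv ℝ R y v * R y = 0 := by
      simpa using h3.symm
    exact eq_neg_of_add_eq_zero_left (by rw [add_comm]; exact h4)
  -- second derivative, with symmetry
  have hsymm : ∀ v w, fderiv ℝ (fderiv ℝ R) y v w = fderiv ℝ (fderiv ℝ R) y w v :=
    (hR.contDiffAt (hU.mem_nhds hy)).isSymmSndFDerivAt (by simp)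
  -- derivative of A_k in direction e_l
  have hgd : ∀ k : Fin m, ∀ z ∈ U,
      DifferentiableAt ℝ (fun w => fderiv ℝ R w (EuclideanSpace.single k 1)) z :=
    fun k z hz => (hR'd z hz).clm_apply (differentiableAt_const _)
  have hAder : ∀ k l : Fin m,
      fderiv ℝ (fun z => R z * fderiv ℝ R z (EuclideanSpace.single k 1)) y
          (EuclideanSpace.single l 1)
        = fderiv ℝ R y (EuclideanSpace.single l 1)
            * fderiv ℝ R y (EuclideanSpace.single k 1)
          + R y * fderiv ℝ (fderiv ℝ R) y (EuclideanSpace.single l 1)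
              (EuclideanSpace.single k 1) := by
    intro k l
    rw [fderiv_matmul (hRd y hy) (hgd k y hy)]
    erw [fderiv_clm_apply (hR'd y hy) (differentiableAt_const _)]
    simp [add_comm]
    erw [ContinuousLinearMap.comp_zero, zero_add]
    rfl
  -- the key algebraic cancellation
  have hRR : R y * R y = 1 := hinv y hy
  have hkey : ∀ v w : 𝔼,
      (R y * fderiv ℝ R y v) * (R y * fderiv ℝ R y w)
        = -(fderiv ℝ R y v * fderiv ℝ R y w) := by
    intro v w
    calc (R y * fderiv ℝ R y v) * (R y * fderiv ℝ R y w)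
        = R y * ((fderiv ℝ R y v * R y) * fderiv ℝ R y w) := by noncomm_ring
      _ = R y * (-(R y * fderiv ℝ R y v) * fderiv ℝ R y w) := by rw [hanti]
      _ = -((R y * R y) * (fderiv ℝ R y v * fderiv ℝ R y w)) := by noncomm_ring
      _ = -(fderiv ℝ R y v * fderiv ℝ R y w) := by rw [hRR, one_mul]
  simp only [connectionCurvature]
  rw [hAder j i, hAder i j, hkey, hkey,
    hsymm (EuclideanSpace.single j 1) (EuclideanSpace.single i 1)]
  abel

end Aux

/-- If `R` is `C²` on an open set `U ⊆ ℝ^m` with `R·R = I` on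
`U`, then the connection `d + A` with `A_i(y) = R(y)·∂_i R(y)` is flat on `U`.
In particular, for a `C²` idempotent-valued map `P` and `R = 2P − I`, the
connection `d + 2ω_P` with `ω_P = P dP − dP P` is flat on `U`. -/
theorem flatness_of_R_dR {m d : ℕ}
    (U : Set (EuclideanSpace ℝ (Fin m))) (hU : IsOpen U)
    (R : EuclideanSpace ℝ (Fin m) → Matrix (Fin d) (Fin d) ℝ)
    (hR : ContDiffOn ℝ 2 R U)
    (hinv : ∀ y ∈ U, R y * R y = 1) :
    (∀ i j : Fin m, ∀ y ∈ U,
        connectionCurvature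
          (fun i z => R z * fderiv ℝ R z (EuclideanSpace.single i 1)) i j y = 0) ∧
    (∀ P : EuclideanSpace ℝ (Fin m) → Matrix (Fin d) (Fin d) ℝ,
        ContDiffOn ℝ 2 P U → (∀ y ∈ U, P y * P y = P y) →
        ∀ i j : Fin m, ∀ y ∈ U,
          connectionCurvature
            (fun i z => (2 : ℝ) •
              (P z * fderiv ℝ P z (EuclideanSpace.single i 1)
                - fderiv ℝ P z (EuclideanSpace.single i 1) * P z)) i j y = 0) := by
  refine ⟨flat_aux U hU R hR hinv, ?_⟩
  intro P hP hP2 i j y hy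
  have hR'c : ContDiffOn ℝ 2 (fun z => (2:ℝ) • P z - 1) U :=
    (hP.const_smul (2:ℝ)).sub contDiffOn_const
  have hPd : ∀ z ∈ U, DifferentiableAt ℝ P z := fun z hz =>
    (hP.contDiffAt (hU.mem_nhds hz)).differentiableAt (by norm_num)
  have hfR' : ∀ z ∈ U,
      fderiv ℝ (fun z => (2:ℝ) • P z - 1) z = (2:ℝ) • fderiv ℝ P z := fun z hz =>
    (((hPd z hz).hasFDerivAt.const_smul (2:ℝ)).sub_const 1).fderiv
  have hinv' : ∀ z ∈ U, ((2:ℝ) • P z - 1) * ((2:ℝ) • P z - 1) = 1 := by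
    intro z hz
    have h : ((2:ℝ) • P z - 1) * ((2:ℝ) • P z - 1)
        = (4:ℝ) • (P z * P z) - (4:ℝ) • P z + 1 := by
      simp only [sub_mul, mul_sub, smul_mul_assoc, mul_smul_comm, one_mul, mul_one, smul_smul]
      module
    rw [h, hP2 z hz]
    module
  have hDrel : ∀ z ∈ U, ∀ v : EuclideanSpace ℝ (Fin m),
      P z * fderiv ℝ P z v + fderiv ℝ P z v * P z = fderiv ℝ P z v := by
    intro z hz v
    have h1 : (fun w => P w * P w) =ᶠ[nhds z] P :=
      Filter.eventuallyEq_of_mem (hU.mem_nhds hz) fun w hw => hP2 w hw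
    have h3 := fderiv_matmul (hPd z hz) (hPd z hz) v
    rw [h1.fderiv_eq] at h3
    exact h3.symm
  have hBA : ∀ k : Fin m, ∀ z ∈ U,
      (2:ℝ) • (P z * fderiv ℝ P z (EuclideanSpace.single k 1)
          - fderiv ℝ P z (EuclideanSpace.single k 1) * P z)
        = ((2:ℝ) • P z - 1)
            * fderiv ℝ (fun z => (2:ℝ) • P z - 1) z (EuclideanSpace.single k 1) := by
    intro k z hz
    rw [hfR' z hz]
    calc (2:ℝ) • (P z * fderiv ℝ P z (EuclideanSpace.single k 1)
          - fderiv ℝ P z (EuclideanSpace.single k 1) * P z)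
        = (4:ℝ) • (P z * fderiv ℝ P z (EuclideanSpace.single k 1))
            - (2:ℝ) • (P z * fderiv ℝ P z (EuclideanSpace.single k 1)
              + fderiv ℝ P z (EuclideanSpace.single k 1) * P z) := by module
      _ = (4:ℝ) • (P z * fderiv ℝ P z (EuclideanSpace.single k 1))
            - (2:ℝ) • fderiv ℝ P z (EuclideanSpace.single k 1) := by
          rw [hDrel z hz]
      _ = ((2:ℝ) • P z - 1)
            * (((2:ℝ) • fderiv ℝ P z) (EuclideanSpace.single k 1)) := by
          simp only [ContinuousLinearMap.coe_smul', Pi.smul_apply, sub_mul, one_mul,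
            smul_mul_assoc, mul_smul_comm]
          module
  have hflat := flat_aux U hU (fun z => (2:ℝ) • P z - 1) hR'c hinv' i j y hy
  simp only [connectionCurvature] at hflat ⊢
  have hfe : ∀ k : Fin m,
      (fun z => (2:ℝ) • (P z * fderiv ℝ P z (EuclideanSpace.single k 1)
          - fderiv ℝ P z (EuclideanSpace.single k 1) * P z))
        =ᶠ[nhds y] fun z => ((2:ℝ) • P z - 1)
            * fderiv ℝ (fun z => (2:ℝ) • P z - 1) z (EuclideanSpace.single k 1) :=
    fun k => Filter.eventuallyEq_of_mem (hU.mem_nhds hy) fun z hz => hBA k z hz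
  rw [(hfe j).fderiv_eq, (hfe i).fderiv_eq, hBA i y hy, hBA j y hy]
  exact hflat
end

section
/- Let u : ℝ³ \ {0} → ℝ³ be defined by u(x) = x/‖x‖. Then u is differentiable at every x ≠ 0, and for every r > 0 the squared L² norm of its differential over the ball of radius r centred at the origin satisfies ∫_{B_r(0)} Σ_{i=1}^{3} ‖(fderiv u x)(e_i)‖² dx = 8π·r, where (e_i) is the standard orthonormal basis of ℝ³. In particular r^{−1}·‖du‖²_{L²(B_r(0))} = 8π for all r > 0. -/
open scoped Real
open MeasureTheory RealInnerProductSpace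

noncomputable abbrev E3 := EuclideanSpace ℝ (Fin 3)

noncomputable def Dmap (x : E3) : E3 →L[ℝ] E3 :=
  ‖x‖⁻¹ • ContinuousLinearMap.id ℝ E3 +
    ((-(‖x‖ ^ 2)⁻¹) • (‖x‖⁻¹ • innerSL ℝ x)).smulRight x

lemma hasFDerivAt_norm' (x : E3) (hx : x ≠ 0) :
    HasFDerivAt (fun y : E3 => ‖y‖) (‖x‖⁻¹ • innerSL ℝ x) x := by
  have hx0 : ‖x‖ ≠ 0 := norm_ne_zero_iff.mpr hx
  have h1 : HasFDerivAt (fun y : E3 => ‖y‖ ^ 2) ((2 : ℕ) • innerSL ℝ x) x :=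
    (hasStrictFDerivAt_norm_sq x).hasFDerivAt
  have h2 : ‖x‖ ^ 2 ≠ 0 := pow_ne_zero _ hx0
  have h3 := (Real.hasDerivAt_sqrt h2).comp_hasFDerivAt x h1
  have h4 : (fun y : E3 => Real.sqrt (‖y‖ ^ 2)) = fun y : E3 => ‖y‖ := by
    funext y; exact Real.sqrt_sq (norm_nonneg y)
  simp only [Function.comp_def] at h3
  rw [h4, Real.sqrt_sq (norm_nonneg x)] at h3
  refine h3.congr_fderiv ?_
  ext y
  simp only [ContinuousLinearMap.smul_apply, ← Nat.cast_smul_eq_nsmul ℝ, smul_eq_mul]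
  field_simp
  ring

lemma hasFDerivAt_u (x : E3) (hx : x ≠ 0) :
    HasFDerivAt (fun y : E3 => ‖y‖⁻¹ • y) (Dmap x) x := by
  have hx0 : ‖x‖ ≠ 0 := norm_ne_zero_iff.mpr hx
  have hinv : HasFDerivAt (fun y : E3 => ‖y‖⁻¹)
      ((-(‖x‖ ^ 2)⁻¹) • (‖x‖⁻¹ • innerSL ℝ x)) x := by
    have := (hasDerivAt_inv hx0).comp_hasFDerivAt x (hasFDerivAt_norm' x hx)
    simpa [Function.comp_def] using this
  have := hinv.smul (hasFDerivAt_id x)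
  exact this

lemma sum_sq_eq (x : E3) : ∑ i : Fin 3, (x i) ^ 2 = ‖x‖ ^ 2 := by
  have h := real_inner_self_eq_norm_sq x
  rw [← h, PiLp.inner_apply]
  simp [sq]

lemma energy_eq (x : E3) (hx : x ≠ 0) :
    ∑ i : Fin 3, ‖Dmap x (EuclideanSpace.single i 1)‖ ^ 2 = 2 * (‖x‖ ^ 2)⁻¹ := by
  have hx0 : ‖x‖ ≠ 0 := norm_ne_zero_iff.mpr hx
  have key : ∀ i : Fin 3, ‖Dmap x (EuclideanSpace.single i 1)‖ ^ 2 =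
      (‖x‖ ^ 2)⁻¹ - ((‖x‖ ^ 2)⁻¹) ^ 2 * (x i) ^ 2 := by
    intro i
    set e : E3 := EuclideanSpace.single i 1 with he
    have hDe : Dmap x e = ‖x‖⁻¹ • e + (-(‖x‖ ^ 2)⁻¹ * (‖x‖⁻¹ * (x i))) • x := by
      simp only [Dmap, ContinuousLinearMap.add_apply, ContinuousLinearMap.smul_apply,
        ContinuousLinearMap.id_apply, ContinuousLinearMap.smulRight_apply]
      congr 1
      rw [smul_smul]
      congr 1
      have : (innerSL ℝ x) e = x i := by
        simp [he, EuclideanSpace.inner_single_right]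
      rw [this, smul_eq_mul]
      ring
    have hee : (inner ℝ e e : ℝ) = 1 := by
      simp [he, EuclideanSpace.inner_single_left, EuclideanSpace.single_apply]
    have hex : (inner ℝ e x : ℝ) = x i := by
      simp [he, EuclideanSpace.inner_single_left]
    have hxx : (inner ℝ x x : ℝ) = ‖x‖ ^ 2 := real_inner_self_eq_norm_sq x
    have : ‖Dmap x e‖ ^ 2 = (inner ℝ (Dmap x e) (Dmap x e) : ℝ) := (real_inner_self_eq_norm_sq _).symm
    rw [this, hDe]
    rw [inner_add_add_self]
    have hxe : (inner ℝ x e : ℝ) = x i := by rw [real_inner_comm]; exact hex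
    simp only [real_inner_smul_left, real_inner_smul_right, hee, hex, hxx, hxe]
    field_simp
    ring
  rw [Finset.sum_congr rfl fun i _ => key i, Finset.sum_sub_distrib, Finset.sum_const,
    ← Finset.mul_sum, sum_sq_eq]
  simp only [Finset.card_univ, Fintype.card_fin, nsmul_eq_mul, Nat.cast_ofNat]
  field_simp
  ring

lemma gamma_52 : Real.Gamma ((3 : ℝ) / 2 + 1) = 3 / 4 * Real.sqrt π := by
  rw [Real.Gamma_add_one (by norm_num)]
  have : (3 : ℝ) / 2 = 1 / 2 + 1 := by norm_num
  rw [this, Real.Gamma_add_one (by norm_num), Real.Gamma_one_half_eq]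
  ring

lemma vol_ball_one :
    (MeasureTheory.volume (Metric.ball (0 : E3) 1)).toReal = 4 / 3 * π := by
  rw [EuclideanSpace.volume_ball]
  have hs : Real.sqrt π > 0 := Real.sqrt_pos.mpr Real.pi_pos
  have hγ : Real.Gamma ((Fintype.card (Fin 3) : ℝ) / 2 + 1) = 3 / 4 * Real.sqrt π := by
    simpa using gamma_52
  rw [hγ]
  have h3 : Real.sqrt π ^ Fintype.card (Fin 3) = π * Real.sqrt π := by
    simp only [Fintype.card_fin]
    rw [pow_succ, Real.sq_sqrt Real.pi_pos.le]
  rw [h3]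
  rw [ENNReal.ofReal_one, one_pow, one_mul, ENNReal.toReal_ofReal (by positivity)]
  field_simp

lemma integral_energy (r : ℝ) (hr : 0 < r) :
    ∫ x in Metric.ball (0 : E3) r, 2 * (‖x‖ ^ 2)⁻¹ = 8 * π * r := by
  have hind : ∀ x : E3, (Metric.ball (0 : E3) r).indicator (fun x => 2 * (‖x‖ ^ 2)⁻¹) x
      = (Set.Iio r).indicator (fun y => 2 * (y ^ 2)⁻¹) ‖x‖ := by
    intro x
    by_cases hx : ‖x‖ < r
    · rw [Set.indicator_of_mem (mem_ball_zero_iff.mpr hx),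
        Set.indicator_of_mem (Set.mem_Iio.mpr hx)]
    · rw [Set.indicator_of_notMem (fun h => hx (mem_ball_zero_iff.mp h)),
        Set.indicator_of_notMem (fun h => hx (Set.mem_Iio.mp h))]
  rw [← MeasureTheory.integral_indicator measurableSet_ball]
  rw [funext hind]
  rw [MeasureTheory.integral_fun_norm_addHaar (volume : Measure E3)
    ((Set.Iio r).indicator (fun y => 2 * (y ^ 2)⁻¹))]
  have hdim : Module.finrank ℝ E3 = 3 := by simp [finrank_euclideanSpace]
  rw [hdim, measureReal_def, vol_ball_one]
  have hI : ∫ y in Set.Ioi (0 : ℝ), y ^ (3 - 1) • (Set.Iio r).indicator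
      (fun y => 2 * (y ^ 2)⁻¹) y = 2 * r := by
    have hcg : ∀ y ∈ Set.Ioi (0 : ℝ), y ^ (3 - 1) • (Set.Iio r).indicator
        (fun y => 2 * (y ^ 2)⁻¹) y = (Set.Ioo (0 : ℝ) r).indicator (fun _ => (2 : ℝ)) y := by
      intro y hy
      have hy0 : (0 : ℝ) < y := hy
      by_cases hyr : y < r
      · rw [Set.indicator_of_mem (Set.mem_Iio.mpr hyr),
          Set.indicator_of_mem (Set.mem_Ioo.mpr ⟨hy0, hyr⟩)]
        have : y ≠ 0 := ne_of_gt hy0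
        simp only [smul_eq_mul]
        field_simp
      · rw [Set.indicator_of_notMem (fun h => hyr (Set.mem_Iio.mp h)),
          Set.indicator_of_notMem (fun h => hyr (Set.mem_Ioo.mp h).2)]
        simp
    rw [MeasureTheory.setIntegral_congr_fun measurableSet_Ioi hcg]
    rw [MeasureTheory.setIntegral_indicator measurableSet_Ioo]
    have : Set.Ioi (0 : ℝ) ∩ Set.Ioo 0 r = Set.Ioo 0 r :=
      Set.inter_eq_self_of_subset_right Set.Ioo_subset_Ioi_self
    rw [this, MeasureTheory.setIntegral_const, measureReal_def, Real.volume_Ioo,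
      ENNReal.toReal_ofReal (by linarith), sub_zero, smul_eq_mul]
    ring
  rw [hI]
  simp only [smul_eq_mul, Nat.cast_ofNat]
  ring


/-- The map `u(x) = x/‖x‖` from `ℝ³ \ {0}` to `ℝ³` is
differentiable at every `x ≠ 0` and satisfies
`∫_{B_r(0)} |du|² dx = 8π·r` for every `r > 0`, where
`|du|² = Σᵢ ‖(fderiv u x)(eᵢ)‖²` is the squared Hilbert–Schmidt norm of its
differential; in particular `r⁻¹·‖du‖²_{L²(B_r(0))} = 8π` for all `r > 0`. -/
theorem hedgehog_energy
    (u : EuclideanSpace ℝ (Fin 3) → EuclideanSpace ℝ (Fin 3))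
    (hu : ∀ x : EuclideanSpace ℝ (Fin 3), x ≠ 0 → u x = ‖x‖⁻¹ • x) :
    (∀ x : EuclideanSpace ℝ (Fin 3), x ≠ 0 → DifferentiableAt ℝ u x) ∧
    (∀ r : ℝ, 0 < r →
      ∫ x in Metric.ball (0 : EuclideanSpace ℝ (Fin 3)) r,
        ∑ i : Fin 3, ‖fderiv ℝ u x (EuclideanSpace.single i 1)‖ ^ 2 =
      8 * π * r) := by
  have heq : ∀ x : EuclideanSpace ℝ (Fin 3), x ≠ 0 →
      u =ᶠ[nhds x] fun y : E3 => ‖y‖⁻¹ • y := by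
    intro x hx
    filter_upwards [IsOpen.mem_nhds isOpen_compl_singleton hx] with y hy
    exact hu y hy
  have hdiff : ∀ x : EuclideanSpace ℝ (Fin 3), x ≠ 0 → DifferentiableAt ℝ u x := by
    intro x hx
    exact ((heq x hx).differentiableAt_iff).mpr (hasFDerivAt_u x hx).differentiableAt
  refine ⟨hdiff, ?_⟩
  intro r hr
  have hfd : ∀ x : EuclideanSpace ℝ (Fin 3), x ≠ 0 → fderiv ℝ u x = Dmap x := by
    intro x hx
    rw [(heq x hx).fderiv_eq, (hasFDerivAt_u x hx).fderiv]
  have h0 : ∀ᵐ x : E3 ∂MeasureTheory.volume, x ≠ 0 := by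
    rw [MeasureTheory.ae_iff]
    simpa using MeasureTheory.measure_singleton (0 : E3)
  have hae : ∀ᵐ x : E3 ∂MeasureTheory.volume, x ∈ Metric.ball (0 : E3) r →
      (∑ i : Fin 3, ‖fderiv ℝ u x (EuclideanSpace.single i 1)‖ ^ 2) = 2 * (‖x‖ ^ 2)⁻¹ := by
    filter_upwards [h0] with x hx _
    rw [Finset.sum_congr rfl fun i _ => by rw [hfd x hx]]
    exact energy_eq x hx
  rw [MeasureTheory.setIntegral_congr_ae measurableSet_ball hae]
  exact integral_energy r hr
end
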